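/- Let n ≥ 1, G = ℍⁿ = {x ∈ ℝⁿ : xₙ > 0}, x ∈ G, and r ∈ (0,1). Then B_j(x, m) ⊆ B_s(x, r) ⊆ B_j(x, M), where m = log(1 + 2r/√(1−r²)) and M = log(1 + 2r/(1−r)). -/

import Mathlib

/-- The triangular ratio metric `s_G(x,y) = sup_{z ∈ ∂G} |x−y|/(|z−x|+|z−y|)`. -/
noncomputable def sMetric {n : ℕ} (G : Set (EuclideanSpace ℝ (Fin n)))
    (x y : EuclideanSpace ℝ (Fin n)) : ℝ :=
  ⨆ z ∈ frontier G, dist x y / (dist z x + dist z y)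

/-- The metric ball `B_s(x,r) = {y ∈ G : s_G(x,y) < r}`. -/
def sBall {n : ℕ} (G : Set (EuclideanSpace ℝ (Fin n))) (x : EuclideanSpace ℝ (Fin n))
    (r : ℝ) : Set (EuclideanSpace ℝ (Fin n)) :=
  {y ∈ G | sMetric G x y < r}

/-- The j-metric `j_G(x,y) = log(1 + |x−y|/min{d_G(x), d_G(y)})`,
where `d_G(z) = dist(z, ∂G)`. -/
noncomputable def jMetric {n : ℕ} (G : Set (EuclideanSpace ℝ (Fin n)))
    (x y : EuclideanSpace ℝ (Fin n)) : ℝ :=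
  Real.log (1 + dist x y /
    min (Metric.infDist x (frontier G)) (Metric.infDist y (frontier G)))

/-- The metric ball `B_j(x,r) = {y ∈ G : j_G(x,y) < r}`. -/
def jBall {n : ℕ} (G : Set (EuclideanSpace ℝ (Fin n))) (x : EuclideanSpace ℝ (Fin n))
    (r : ℝ) : Set (EuclideanSpace ℝ (Fin n)) :=
  {y ∈ G | jMetric G x y < r}



namespace HalfSpaceAux

variable {n : ℕ} (i : Fin n)

lemma frontierHS :
    frontier {w : EuclideanSpace ℝ (Fin n) | 0 < w i} = {w | w i = 0} := by
  have hopen : IsOpen {w : EuclideanSpace ℝ (Fin n) | 0 < w i} :=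
    isOpen_lt continuous_const (EuclideanSpace.proj (𝕜 := ℝ) i).continuous
  have hcl := closure_open_halfSpace (n := n) 2 0 i
  rw [frontier, hopen.interior_eq, hcl]
  ext y
  simp only [Set.mem_diff, Set.mem_setOf_eq, not_lt]
  constructor
  · rintro ⟨h1, h2⟩; linarith
  · intro h; constructor <;> simp [h]

lemma abs_coord_le_dist (u v : EuclideanSpace ℝ (Fin n)) : |u i - v i| ≤ dist u v := by
  rw [EuclideanSpace.dist_eq, show |u i - v i| = Real.sqrt (dist (u i) (v i) ^ 2) by
    rw [Real.sqrt_sq dist_nonneg, Real.dist_eq]]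
  apply Real.sqrt_le_sqrt
  exact Finset.single_le_sum (f := fun j => dist (u j) (v j) ^ 2)
    (fun j _ => sq_nonneg _) (Finset.mem_univ i)

lemma infDistHS (y : EuclideanSpace ℝ (Fin n)) (hy : 0 ≤ y i) :
    Metric.infDist y {w : EuclideanSpace ℝ (Fin n) | w i = 0} = y i := by
  have hne : ({w : EuclideanSpace ℝ (Fin n) | w i = 0}).Nonempty := ⟨0, by simp⟩
  have hmem : (WithLp.toLp 2 (Function.update y i 0) : EuclideanSpace ℝ (Fin n)) ∈
      {w : EuclideanSpace ℝ (Fin n) | w i = 0} := by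
    show Function.update y i 0 i = 0
    rw [Function.update_self]
  apply le_antisymm
  · calc Metric.infDist y {w : EuclideanSpace ℝ (Fin n) | w i = 0}
        ≤ dist y (WithLp.toLp 2 (Function.update y i 0) : EuclideanSpace ℝ (Fin n)) := Metric.infDist_le_dist_of_mem hmem
      _ = y i := by
          rw [EuclideanSpace.dist_eq]
          rw [show ∑ j, dist (y j) ((WithLp.toLp 2 (Function.update y i 0) : EuclideanSpace ℝ (Fin n)) j) ^ 2 = (y i)^2 by
            rw [Finset.sum_eq_single i]
            · change dist (y i) (Function.update y i 0 i) ^ 2 = _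
              rw [Function.update_self, Real.dist_eq, sub_zero, sq_abs]
            · intro j _ hj; change dist (y j) (Function.update y i 0 j) ^ 2 = _; rw [Function.update_of_ne hj]; simp
            · simp]
          exact Real.sqrt_sq hy
  · by_contra hlt
    push_neg at hlt
    obtain ⟨z, hz, hdz⟩ := (Metric.infDist_lt_iff hne).1 hlt
    have h1 : |y i - z i| ≤ dist y z := abs_coord_le_dist i y z
    have : z i = 0 := hz
    rw [this, sub_zero] at h1
    have := le_abs_self (y i)
    linarith

/-- `dist u v ^ 2` as a sum of squares of coordinate differences. -/
lemma dist_sq (u v : EuclideanSpace ℝ (Fin n)) :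
    dist u v ^ 2 = ∑ j, (u j - v j) ^ 2 := by
  rw [EuclideanSpace.dist_eq, Real.sq_sqrt (by positivity)]
  exact Finset.sum_congr rfl fun j _ => by rw [Real.dist_eq, sq_abs]

/-- Reflection in the hyperplane `{w i = 0}`. -/
noncomputable def refl (y : EuclideanSpace ℝ (Fin n)) : EuclideanSpace ℝ (Fin n) :=
  WithLp.toLp 2 (Function.update y i (-(y i)))

lemma refl_apply_self (y : EuclideanSpace ℝ (Fin n)) : refl i y i = -(y i) :=
  Function.update_self _ _ _

lemma refl_apply_ne (y : EuclideanSpace ℝ (Fin n)) {j : Fin n} (hj : j ≠ i) :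
    refl i y j = y j := Function.update_of_ne hj _ _

lemma dist_refl_of_mem (y z : EuclideanSpace ℝ (Fin n)) (hz : z i = 0) :
    dist z (refl i y) = dist z y := by
  have h2 : dist z (refl i y) ^ 2 = dist z y ^ 2 := by
    rw [dist_sq, dist_sq]
    refine Finset.sum_congr rfl fun j _ => ?_
    by_cases hj : j = i
    · subst hj; rw [refl_apply_self, hz]; ring
    · rw [refl_apply_ne i y hj]
  have := Real.sqrt_sq (dist_nonneg (x := z) (y := refl i y))
  nlinarith [dist_nonneg (x := z) (y := refl i y), dist_nonneg (x := z) (y := y)]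

lemma dist_refl_sq (x y : EuclideanSpace ℝ (Fin n)) :
    dist x (refl i y) ^ 2 = dist x y ^ 2 + 4 * x i * y i := by
  rw [dist_sq, dist_sq, ← Finset.sum_erase_add _ _ (Finset.mem_univ i),
    ← Finset.sum_erase_add (f := fun j => (x j - y j)^2) _ (Finset.mem_univ i)]
  have he : ∑ j ∈ Finset.univ.erase i, (x j - refl i y j) ^ 2
      = ∑ j ∈ Finset.univ.erase i, (x j - y j) ^ 2 :=
    Finset.sum_congr rfl fun j hj => by
      rw [refl_apply_ne i y (Finset.mem_erase.1 hj).1]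
  rw [he, refl_apply_self]
  ring


end HalfSpaceAux

namespace HalfSpaceAux
variable {n : ℕ} (i : Fin n)

lemma dist_refl_pos (x y : EuclideanSpace ℝ (Fin n)) (hx : 0 < x i) (hy : 0 < y i) :
    0 < dist x (refl i y) := by
  have h := abs_coord_le_dist i x (refl i y)
  rw [refl_apply_self] at h
  have : 0 < |x i - -(y i)| := by rw [abs_sub_comm]; rw [abs_pos]; intro hc; linarith
  linarith

lemma term_le (x y : EuclideanSpace ℝ (Fin n)) (hx : 0 < x i) (hy : 0 < y i)
    (z : EuclideanSpace ℝ (Fin n)) (hz : z i = 0) :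
    dist x y / (dist z x + dist z y) ≤ dist x y / dist x (refl i y) := by
  have hD := dist_refl_pos i x y hx hy
  have htri : dist x (refl i y) ≤ dist z x + dist z y := by
    calc dist x (refl i y) ≤ dist x z + dist z (refl i y) := dist_triangle _ _ _
      _ = dist z x + dist z y := by rw [dist_comm x z, dist_refl_of_mem i y z hz]
  exact div_le_div_of_nonneg_left dist_nonneg hD htri

lemma sUpper (x y : EuclideanSpace ℝ (Fin n)) (hx : 0 < x i) (hy : 0 < y i) :
    sMetric {w : EuclideanSpace ℝ (Fin n) | 0 < w i} x y
      ≤ dist x y / dist x (refl i y) := by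
  have hD := dist_refl_pos i x y hx hy
  have hb : (0:ℝ) ≤ dist x y / dist x (refl i y) := by positivity
  rw [sMetric, frontierHS]
  refine Real.iSup_le (fun z => Real.iSup_le (fun hz => term_le i x y hx hy z hz) hb) hb

lemma sLower (x y : EuclideanSpace ℝ (Fin n)) (hx : 0 < x i) (hy : 0 < y i) :
    dist x y / dist x (refl i y)
      ≤ sMetric {w : EuclideanSpace ℝ (Fin n) | 0 < w i} x y := by
  have hD := dist_refl_pos i x y hx hy
  have hb : (0:ℝ) ≤ dist x y / dist x (refl i y) := by positivity
  set s : ℝ := x i / (x i + y i) with hs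
  have hxy : 0 < x i + y i := by linarith
  have hs0 : 0 ≤ s := by positivity
  have hs1 : s ≤ 1 := by rw [hs, div_le_one hxy]; linarith
  set z₀ : EuclideanSpace ℝ (Fin n) := (1 - s) • x + s • refl i y with hz₀
  have hz₀i : z₀ i = 0 := by
    have : z₀ i = (1 - s) * x i + s * (-(y i)) := by
      rw [hz₀]
      simp [PiLp.add_apply, PiLp.smul_apply, smul_eq_mul, refl_apply_self]
    rw [this, hs]
    field_simp
    ring
  have hseg : z₀ ∈ segment ℝ x (refl i y) :=
    ⟨1 - s, s, by linarith, hs0, by ring, rfl⟩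
  have hsum : dist x z₀ + dist z₀ (refl i y) = dist x (refl i y) :=
    dist_add_dist_of_mem_segment hseg
  have hterm : dist x y / (dist z₀ x + dist z₀ y) = dist x y / dist x (refl i y) := by
    rw [← dist_refl_of_mem i y z₀ hz₀i, dist_comm z₀ x, hsum]
  rw [sMetric, frontierHS]
  have hbdd : BddAbove (Set.range fun z : EuclideanSpace ℝ (Fin n) =>
      ⨆ _ : z ∈ {w : EuclideanSpace ℝ (Fin n) | w i = 0},
        dist x y / (dist z x + dist z y)) := by
    refine ⟨dist x y / dist x (refl i y), ?_⟩
    rintro _ ⟨z, rfl⟩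
    exact Real.iSup_le (fun hz => term_le i x y hx hy z hz) hb
  calc dist x y / dist x (refl i y)
      = dist x y / (dist z₀ x + dist z₀ y) := hterm.symm
    _ = ⨆ _ : z₀ ∈ {w : EuclideanSpace ℝ (Fin n) | w i = 0},
          dist x y / (dist z₀ x + dist z₀ y) := (ciSup_pos (f := fun _ => dist x y / (dist z₀ x + dist z₀ y)) hz₀i).symm
    _ ≤ _ := le_ciSup hbdd z₀


lemma jMetric_eq (x y : EuclideanSpace ℝ (Fin n)) (hx : 0 < x i) (hy : 0 < y i) :
    jMetric {w : EuclideanSpace ℝ (Fin n) | 0 < w i} x y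
      = Real.log (1 + dist x y / min (x i) (y i)) := by
  rw [jMetric, frontierHS, infDistHS i x hx.le, infDistHS i y hy.le]


end HalfSpaceAux

open HalfSpaceAux in
set_option maxHeartbeats 1000000 in
/-- Let n ≥ 1, G = ℍⁿ = {x ∈ ℝⁿ : xₙ > 0}, x ∈ G, and r ∈ (0,1). Then
B_j(x, m) ⊆ B_s(x, r) ⊆ B_j(x, M), where m = log(1 + 2r/√(1−r²)) and
M = log(1 + 2r/(1−r)). -/
theorem jBall_subset_sBall_subset_jBall_halfSpace (n : ℕ) (hn : 1 ≤ n) (i : Fin n)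
    (hi : (i : ℕ) = n - 1) (x : EuclideanSpace ℝ (Fin n)) (hx : 0 < x i)
    (r : ℝ) (hr : r ∈ Set.Ioo (0:ℝ) 1) :
    jBall {w : EuclideanSpace ℝ (Fin n) | 0 < w i} x
        (Real.log (1 + 2 * r / Real.sqrt (1 - r^2))) ⊆
      sBall {w : EuclideanSpace ℝ (Fin n) | 0 < w i} x r ∧
    sBall {w : EuclideanSpace ℝ (Fin n) | 0 < w i} x r ⊆
      jBall {w : EuclideanSpace ℝ (Fin n) | 0 < w i} x
        (Real.log (1 + 2 * r / (1 - r))) := by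
  obtain ⟨hr0, hr1⟩ := hr
  constructor
  · rintro y ⟨hyG, hyj⟩
    have hy : 0 < y i := hyG
    refine ⟨hyG, ?_⟩
    set t := dist x y with ht
    set m0 := min (x i) (y i) with hm0
    have hm0pos : 0 < m0 := lt_min hx hy
    have ht0 : 0 ≤ t := dist_nonneg
    set q := Real.sqrt (1 - r^2) with hq
    have hq0 : 0 < q := Real.sqrt_pos.2 (by nlinarith)
    have hq2 : q^2 = 1 - r^2 := Real.sq_sqrt (by nlinarith)
    rw [jMetric_eq i x y hx hy] at hyj
    have harg : t / m0 < 2 * r / q := by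
      have h1 : 1 + t / m0 < 1 + 2 * r / q := by
        have hpos1 : (0:ℝ) < 1 + t / m0 := by positivity
        have hpos2 : (0:ℝ) < 1 + 2 * r / q := by positivity
        exact (Real.log_lt_log_iff hpos1 hpos2).1 hyj
      linarith
    have htq : t * q < 2 * r * m0 := by
      rw [div_lt_div_iff₀ hm0pos hq0] at harg; linarith
    -- t² (1−r²) < 4 r² m0² ≤ 4 r² (x i)(y i)
    have hkey : t^2 * (1 - r^2) < 4 * r^2 * (x i * y i) := by
      have hm2 : m0 * m0 ≤ x i * y i :=
        mul_le_mul (min_le_left _ _) (min_le_right _ _) hm0pos.le (le_of_lt hx)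
      have hsq := mul_self_lt_mul_self (mul_nonneg ht0 hq0.le) htq
      nlinarith [hsq, hq2, hm2, sq_nonneg r]
    set D := dist x (refl i y) with hD
    have hDpos : 0 < D := dist_refl_pos i x y hx hy
    have hD2 : D^2 = t^2 + 4 * x i * y i := dist_refl_sq i x y
    have ht_lt : t < r * D := by
      have hsq : t^2 < (r * D)^2 := by rw [mul_pow]; nlinarith
      exact lt_of_pow_lt_pow_left₀ 2 (by positivity) hsq
    have : t / D < r := (div_lt_iff₀ hDpos).2 (by linarith)
    exact lt_of_le_of_lt (sUpper i x y hx hy) this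
  · rintro y ⟨hyG, hys⟩
    have hy : 0 < y i := hyG
    refine ⟨hyG, ?_⟩
    set t := dist x y with ht
    set m0 := min (x i) (y i) with hm0
    have hm0pos : 0 < m0 := lt_min hx hy
    have ht0 : 0 ≤ t := dist_nonneg
    set D := dist x (refl i y) with hD
    have hDpos : 0 < D := dist_refl_pos i x y hx hy
    have hD2 : D^2 = t^2 + 4 * x i * y i := dist_refl_sq i x y
    have hsr : t / D < r := lt_of_le_of_lt (sLower i x y hx hy) hys
    have ht_lt : t < r * D := by rw [div_lt_iff₀ hDpos] at hsr; linarith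
    have hkey : t^2 * (1 - r^2) < 4 * r^2 * (x i * y i) := by nlinarith
    -- x i * y i ≤ m0 * (m0 + t)
    have hcoord : |x i - y i| ≤ t := abs_coord_le_dist i x y
    have hprod : x i * y i ≤ m0 * (m0 + t) := by
      rcases le_total (x i) (y i) with hle | hle
      · have h1 : m0 = x i := min_eq_left hle
        have h2 : y i ≤ x i + t := by
          have := abs_le.1 hcoord; linarith [this.1]
        rw [h1]; nlinarith
      · have h1 : m0 = y i := min_eq_right hle
        have h2 : x i ≤ y i + t := by
          have := abs_le.1 hcoord; linarith [this.2]
        rw [h1]; nlinarith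
    have hmain : t * (1 - r) < 2 * r * m0 := by
      by_contra hcon
      push_neg at hcon
      have hA : 2 * r * m0 ≤ t * (1 - r) := hcon
      have hB : t^2 * (1 - r^2) < 4 * r^2 * (m0 * (m0 + t)) := by
        have h4 := mul_le_mul_of_nonneg_left hprod (by positivity : (0:ℝ) ≤ 4 * r^2)
        linarith
      have hn1 : (0:ℝ) ≤ 2 * r * m0 := by nlinarith
      have hn2 : (0:ℝ) ≤ t * (1 + r) := mul_nonneg ht0 (by linarith)
      nlinarith [mul_le_mul_of_nonneg_left hA hn1, mul_le_mul_of_nonneg_left hA hn2]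
    rw [jMetric_eq i x y hx hy]
    have hpos : (0:ℝ) < 1 + t / m0 := by
      have : 0 ≤ t / m0 := div_nonneg ht0 hm0pos.le
      linarith
    apply Real.log_lt_log hpos
    have : t / m0 < 2 * r / (1 - r) := by
      rw [div_lt_div_iff₀ hm0pos (by linarith : (0:ℝ) < 1 - r)]; linarith
    linarith
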